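/- Let $(F,\mathcal{F})$ be a measurable space with a decreasing sequence of measurable sets $F_i \supset F_{i+1}$, $i \in \mathbb{Z}$, such that $F = \bigcup_{k\in\mathbb{N}} F_{-k}$. Let $\mathcal{H}$ be the set of $\sigma$-finite measures $\mu$ on $F$ with $0 < \mu(F_i) < \infty$ for all $i$, modulo scale equivalence ($\mu \sim \alpha\mu$ for $\alpha > 0$), and let $H$ be the set of sequences $(\mu_i)_{i\in\mathbb{Z}}$ of probability measures, $\mu_i$ a probability measure on $F_i$, with $\mu_i(F_{i+1}) > 0$ and $\mu_{i+1} = \mu_i|_{F_{i+1}}/\mu_i(F_{i+1})$ for all $i$. Then the map $\eta([\mu]) = (\mu|_{F_i}/\mu(F_i))_{i\in\mathbb{Z}}$ is a well-defined bijection from $\mathcal{H}/\sim$ onto $H$. -/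

import Mathlib

open MeasureTheory Set

variable {F : Type*} [MeasurableSpace F]

/-- `𝓗((F_i))`: σ-finite measures with `0 < μ(F_i) < ∞` for all `i`. -/
def HClass (Fi : ℤ → Set F) : Set (Measure F) :=
  {μ | SigmaFinite μ ∧ ∀ i : ℤ, 0 < μ (Fi i) ∧ μ (Fi i) < ⊤}

/-- `H((F_i))`: sequences `(μ_i)` of probability measures, `μ_i` concentrated on `F_i`,
with `μ_i(F_{i+1}) > 0` and `μ_{i+1}` the normalized restriction of `μ_i` to `F_{i+1}`. -/
def HSeq (Fi : ℤ → Set F) : Set (ℤ → Measure F) :=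
  {ν | ∀ i : ℤ, ν i Set.univ = 1 ∧ ν i (Fi i) = 1 ∧ 0 < ν i (Fi (i + 1)) ∧
    ν (i + 1) = (ν i (Fi (i + 1)))⁻¹ • (ν i).restrict (Fi (i + 1))}

/-- The map `η : μ ↦ (μ|_{F_i} / μ(F_i))_{i ∈ ℤ}`. -/
noncomputable def etaMap (Fi : ℤ → Set F) (μ : Measure F) : ℤ → Measure F :=
  fun i => (μ (Fi i))⁻¹ • μ.restrict (Fi i)

private lemma part1 (Fi : ℤ → Set F) (hmeas : ∀ i, MeasurableSet (Fi i))
    (hdec : ∀ i : ℤ, Fi (i + 1) ⊆ Fi i) :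
    ∀ μ ∈ HClass Fi, etaMap Fi μ ∈ HSeq Fi := by
  intro μ hμ i
  obtain ⟨ha0, hat⟩ := hμ.2 i
  obtain ⟨hb0, hbt⟩ := hμ.2 (i + 1)
  set a := μ (Fi i) with ha
  set b := μ (Fi (i + 1)) with hb
  have hib : Fi (i+1) ∩ Fi i = Fi (i+1) := inter_eq_self_of_subset_left (hdec i)
  refine ⟨?_, ?_, ?_, ?_⟩
  · simp only [etaMap, Measure.smul_apply, smul_eq_mul,
      Measure.restrict_apply MeasurableSet.univ, univ_inter]
    exact ENNReal.inv_mul_cancel ha0.ne' hat.ne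
  · simp only [etaMap, Measure.smul_apply, smul_eq_mul, Measure.restrict_apply (hmeas i),
      inter_self]
    exact ENNReal.inv_mul_cancel ha0.ne' hat.ne
  · simp only [etaMap, Measure.smul_apply, smul_eq_mul, Measure.restrict_apply (hmeas (i+1)),
      hib]
    exact ENNReal.mul_pos (ENNReal.inv_ne_zero.2 hat.ne) hb0.ne'
  · have h1 : etaMap Fi μ i (Fi (i+1)) = a⁻¹ * b := by
      simp only [etaMap, Measure.smul_apply, smul_eq_mul, Measure.restrict_apply (hmeas (i+1)),
        hib]
      rfl
    rw [h1]
    simp only [etaMap, Measure.restrict_smul, Measure.restrict_restrict (hmeas (i+1)), hib,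
      smul_smul]
    congr 1
    rw [ENNReal.mul_inv (Or.inl (ENNReal.inv_ne_zero.2 hat.ne)) (Or.inl (ENNReal.inv_ne_top.2 ha0.ne')),
      inv_inv, mul_comm a, mul_assoc, ENNReal.mul_inv_cancel ha0.ne' hat.ne, mul_one]

private lemma hseq_pos (Fi : ℤ → Set F) (hmeas : ∀ i, MeasurableSet (Fi i))
    (hanti : Antitone Fi) {ν : ℤ → Measure F} (hν : ν ∈ HSeq Fi) :
    ∀ (n : ℕ) (i : ℤ), 0 < ν i (Fi (i + n)) := by
  intro n
  induction n with
  | zero =>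
    intro i
    simp only [Nat.cast_zero, add_zero]
    rw [(hν i).2.1]; exact zero_lt_one
  | succ n ih =>
    intro i
    have h2 := ih (i + 1)
    rw [(hν i).2.2.2, Measure.smul_apply, smul_eq_mul,
      Measure.restrict_apply (hmeas _)] at h2
    have hss : Fi (i + 1 + n) ∩ Fi (i + 1) = Fi (i + 1 + n) :=
      inter_eq_self_of_subset_left (hanti (by omega))
    rw [hss] at h2
    have hpos : 0 < ν i (Fi (i + 1 + n)) := by
      by_contra hh
      push_neg at hh
      simp [le_zero_iff.1 hh] at h2
    have he : (i + 1 + (n : ℤ)) = i + ((n + 1 : ℕ) : ℤ) := by push_cast; ring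
    rwa [he] at hpos

private lemma hseq_restrict (Fi : ℤ → Set F) (hmeas : ∀ i, MeasurableSet (Fi i))
    {ν : ℤ → Measure F} (hν : ν ∈ HSeq Fi) (i : ℤ) :
    (ν i).restrict (Fi i) = ν i := by
  apply Measure.restrict_eq_self_of_ae_mem
  rw [ae_iff]
  have hc : ν i (Fi i)ᶜ = 0 := by
    rw [measure_compl (hmeas i) (by rw [(hν i).2.1]; exact ENNReal.one_ne_top),
      (hν i).1, (hν i).2.1, tsub_self]
  exact hc

private lemma enn_L1 {a x b : ENNReal} (ha0 : a ≠ 0) (hat : a ≠ ⊤) (h : a⁻¹ * x = b) :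
    x = a * b := by
  rw [← h, ← mul_assoc, ENNReal.mul_inv_cancel ha0 hat, one_mul]

private lemma enn_L2 {b r : ENNReal} (hb0 : b ≠ 0) (hbt : b ≠ ⊤) : r * b * b⁻¹ = r := by
  rw [mul_assoc, ENNReal.mul_inv_cancel hb0 hbt, mul_one]

private lemma part2 (Fi : ℤ → Set F) (hmeas : ∀ i, MeasurableSet (Fi i))
    (hdec : ∀ i : ℤ, Fi (i + 1) ⊆ Fi i) (hcover : ⋃ k : ℕ, Fi (-(k : ℤ)) = Set.univ) :
    ∀ μ ∈ HClass Fi, ∀ μ' ∈ HClass Fi,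
      (etaMap Fi μ = etaMap Fi μ' ↔ ∃ c : NNReal, 0 < c ∧ μ' = (c : ENNReal) • μ) := by
  have hanti : Antitone Fi := antitone_int_of_succ_le fun i => hdec i
  intro μ hμ μ' hμ'
  constructor
  · intro h
    set c0 : ENNReal := μ' (Fi 0) * (μ (Fi 0))⁻¹ with hc0
    have h00 := hμ.2 0
    have h00' := hμ'.2 0
    have hc0t : c0 ≠ ⊤ := ENNReal.mul_ne_top h00'.2.ne (ENNReal.inv_ne_top.2 h00.1.ne')
    have hc00 : c0 ≠ 0 :=
      mul_ne_zero h00'.1.ne' (ENNReal.inv_ne_zero.2 h00.2.ne)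
    refine ⟨c0.toNNReal, ?_, ?_⟩
    · exact ENNReal.toNNReal_pos hc00 hc0t
    have hcc : (c0.toNNReal : ENNReal) = c0 := ENNReal.coe_toNNReal hc0t
    rw [hcc]
    -- key: for each k and measurable s, μ' (s ∩ Fi (-k)) = c0 * μ (s ∩ Fi (-k))
    have key : ∀ (k : ℕ) (s : Set F), MeasurableSet s →
        μ' (s ∩ Fi (-(k : ℤ))) = c0 * μ (s ∩ Fi (-(k : ℤ))) := by
      intro k s hs
      have hk := hμ.2 (-(k : ℤ))
      have hk' := hμ'.2 (-(k : ℤ))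
      have heq := congrFun h (-(k : ℤ))
      have happ : ∀ (t : Set F), MeasurableSet t →
          (μ (Fi (-(k:ℤ))))⁻¹ * μ (t ∩ Fi (-(k:ℤ))) =
          (μ' (Fi (-(k:ℤ))))⁻¹ * μ' (t ∩ Fi (-(k:ℤ))) := by
        intro t ht
        have := congrArg (fun m : Measure F => m t) heq
        simpa [etaMap, Measure.smul_apply, smul_eq_mul,
          Measure.restrict_apply ht] using this
      -- ratio of F_{-k} masses equals c0: use t = Fi 0 ⊆ Fi (-k)
      have hsub : Fi (0 : ℤ) ⊆ Fi (-(k : ℤ)) := hanti (by omega)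
      have h0k := happ (Fi 0) (hmeas 0)
      rw [inter_eq_self_of_subset_left hsub] at h0k
      set r : ENNReal := μ' (Fi (-(k:ℤ))) * (μ (Fi (-(k:ℤ))))⁻¹ with hr
      have h0 : μ' (Fi 0) = r * μ (Fi 0) := by
        rw [enn_L1 hk'.1.ne' hk'.2.ne h0k.symm, ← mul_assoc]
      have hrc : r = c0 := by
        rw [hc0, h0, enn_L2 h00.1.ne' h00.2.ne]
      have hsk := happ s hs
      rw [enn_L1 hk'.1.ne' hk'.2.ne hsk.symm, ← mul_assoc, ← hr, hrc]
    ext s hs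
    have hmono : Monotone (fun k : ℕ => s ∩ Fi (-(k : ℤ))) := by
      intro a b hab
      exact inter_subset_inter_right s (hanti (by omega))
    have hU : (⋃ k : ℕ, s ∩ Fi (-(k : ℤ))) = s := by
      rw [← inter_iUnion, hcover, inter_univ]
    have t1 : Filter.Tendsto (fun k : ℕ => μ' (s ∩ Fi (-(k : ℤ)))) Filter.atTop (nhds (μ' s)) := by
      have := tendsto_measure_iUnion_atTop (μ := μ') hmono
      rwa [hU] at this
    have t2 : Filter.Tendsto (fun k : ℕ => μ' (s ∩ Fi (-(k : ℤ)))) Filter.atTop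
        (nhds ((c0 • μ) s)) := by
      have := tendsto_measure_iUnion_atTop (μ := μ) hmono
      rw [hU] at this
      have := ENNReal.Tendsto.const_mul this (Or.inr hc0t)
      simp only [Measure.smul_apply, smul_eq_mul]
      refine this.congr fun k => ?_
      simp [Function.comp, key k s hs]
    have := tendsto_nhds_unique t1 t2
    simpa [Measure.smul_apply, smul_eq_mul] using this
  · rintro ⟨c, hc, rfl⟩
    funext i
    have hi := hμ.2 i
    have hct : (c : ENNReal) ≠ ⊤ := ENNReal.coe_ne_top
    have hc0 : (c : ENNReal) ≠ 0 := by exact_mod_cast hc.ne'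
    simp only [etaMap, Measure.smul_apply, smul_eq_mul, Measure.restrict_smul, smul_smul]
    congr 1
    rw [ENNReal.mul_inv (Or.inl hc0) (Or.inl hct), mul_assoc,
      mul_comm ((μ (Fi i))⁻¹) (↑c : ENNReal), ← mul_assoc, ENNReal.inv_mul_cancel hc0 hct,
      one_mul]

private lemma part3 (Fi : ℤ → Set F) (hmeas : ∀ i, MeasurableSet (Fi i))
    (hdec : ∀ i : ℤ, Fi (i + 1) ⊆ Fi i) (hcover : ⋃ k : ℕ, Fi (-(k : ℤ)) = Set.univ) :
    ∀ ν ∈ HSeq Fi, ∃ μ ∈ HClass Fi, etaMap Fi μ = ν := by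
  have hanti : Antitone Fi := antitone_int_of_succ_le fun i => hdec i
  intro ν hν
  -- basic quantities
  set b : ℕ → ENNReal := fun k => ν (-(k : ℤ)) (Fi 0) with hb
  have hble : ∀ k, b k ≤ 1 := fun k => (measure_mono (subset_univ _)).trans (hν _).1.le
  have hbpos : ∀ k, 0 < b k := by
    intro k
    have := hseq_pos Fi hmeas hanti hν k (-(k : ℤ))
    rwa [neg_add_cancel] at this
  set a : ℕ → ENNReal := fun k => ν (-((k + 1 : ℕ) : ℤ)) (Fi (-(k : ℤ))) with ha
  have hale : ∀ k, a k ≤ 1 := fun k => (measure_mono (subset_univ _)).trans (hν _).1.le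
  have hcast : ∀ k : ℕ, (-((k + 1 : ℕ) : ℤ) + 1) = -(k : ℤ) := by intro k; push_cast; ring
  have hapos : ∀ k, 0 < a k := by
    intro k
    have := (hν (-((k + 1 : ℕ) : ℤ))).2.2.1
    rwa [hcast k] at this
  -- the recursion, rewritten
  have hrec : ∀ k : ℕ, (ν (-((k + 1 : ℕ) : ℤ))).restrict (Fi (-(k : ℤ))) =
      a k • ν (-(k : ℤ)) := by
    intro k
    have h := (hν (-((k + 1 : ℕ) : ℤ))).2.2.2
    rw [hcast k] at h
    rw [h, smul_smul, ENNReal.mul_inv_cancel (hapos k).ne' (lt_of_le_of_lt (hale k) ENNReal.one_lt_top).ne, one_smul]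
  -- b (k+1) = a k * b k
  have hbrec : ∀ k : ℕ, b (k + 1) = a k * b k := by
    intro k
    have h := (hν (-((k + 1 : ℕ) : ℤ))).2.2.2
    rw [hcast k] at h
    have := congrArg (fun m : Measure F => m (Fi 0)) h
    simp only [Measure.smul_apply, smul_eq_mul,
      Measure.restrict_apply (hmeas 0)] at this
    rw [inter_eq_self_of_subset_left (hanti (by omega))] at this
    -- this : b k = (a k)⁻¹ * b (k+1)
    have h2 : b k = (a k)⁻¹ * b (k + 1) := this
    rw [h2, ← mul_assoc, ENNReal.mul_inv_cancel (hapos k).ne'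
      (lt_of_le_of_lt (hale k) ENNReal.one_lt_top).ne, one_mul]
  -- the partial measures
  set m : ℕ → Measure F := fun k => (b k)⁻¹ • ν (-(k : ℤ)) with hm
  have hmres : ∀ k, (m k).restrict (Fi (-(k : ℤ))) = m k := by
    intro k
    rw [hm]
    simp only [Measure.restrict_smul]
    rw [hseq_restrict Fi hmeas hν]
  have hconsist : ∀ k : ℕ, (m (k + 1)).restrict (Fi (-(k : ℤ))) = m k := by
    intro k
    rw [hm]
    simp only [Measure.restrict_smul]
    rw [hrec k, smul_smul, hbrec k,
      ENNReal.mul_inv (Or.inl (hapos k).ne')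
        (Or.inl (lt_of_le_of_lt (hale k) ENNReal.one_lt_top).ne),
      mul_comm ((a k)⁻¹), mul_assoc,
      ENNReal.inv_mul_cancel (hapos k).ne' (lt_of_le_of_lt (hale k) ENNReal.one_lt_top).ne,
      mul_one]
  -- the slices
  set E : ℕ → Set F := fun k =>
    Nat.casesOn k (Fi 0) (fun j => Fi (-((j + 1 : ℕ) : ℤ)) \ Fi (-(j : ℤ))) with hE
  have hEmeas : ∀ k, MeasurableSet (E k) := by
    intro k
    cases k with
    | zero => exact hmeas 0
    | succ j => exact (hmeas _).diff (hmeas _)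
  have hEsub : ∀ k, E k ⊆ Fi (-(k : ℤ)) := by
    intro k
    cases k with
    | zero => simp [hE]
    | succ j => exact diff_subset
  have hEdisj : ∀ j l : ℕ, j < l → E l ∩ E j = ∅ := by
    intro j l hjl
    cases l with
    | zero => omega
    | succ i =>
      apply eq_empty_of_subset_empty
      intro x ⟨hx1, hx2⟩
      exact hx1.2 (hanti (by omega : -(i : ℤ) ≤ -(j : ℤ)) (hEsub j hx2))
  set μ : Measure F := Measure.sum (fun k => (m k).restrict (E k)) with hμ
  -- restriction of μ to Fi (-k) is m k
  have hres : ∀ k : ℕ, μ.restrict (Fi (-(k : ℤ))) = m k := by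
    intro k
    induction k with
    | zero =>
      simp only [Nat.cast_zero, neg_zero]
      rw [hμ, Measure.restrict_sum _ (hmeas 0)]
      ext s hs
      rw [Measure.sum_apply _ hs]
      rw [tsum_eq_single 0 ?_]
      · rw [Measure.restrict_restrict (hmeas 0)]
        have : Fi (0 : ℤ) ∩ E 0 = Fi 0 := by simp [hE]
        rw [this]
        have h0 : (m 0).restrict (Fi (0 : ℤ)) = m 0 := by
          have := hmres 0
          simpa using this
        rw [h0]
      · intro j hj
        cases j with
        | zero => omega
        | succ i =>
          rw [Measure.restrict_restrict (hmeas 0)]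
          have : Fi ((0 : ℤ)) ∩ E (i + 1) = ∅ := by
            apply eq_empty_of_subset_empty
            intro x ⟨hx1, hx2⟩
            exact hx2.2 (hanti (by omega : -(i : ℤ) ≤ 0) hx1)
          rw [this]
          simp
    | succ k ih =>
      have hsub : Fi (-(k : ℤ)) ⊆ Fi (-((k + 1 : ℕ) : ℤ)) := hanti (by push_cast; omega)
      have hun : Fi (-((k + 1 : ℕ) : ℤ)) = Fi (-(k : ℤ)) ∪ E (k + 1) :=
        (union_diff_cancel hsub).symm
      have hdisj : Disjoint (Fi (-(k : ℤ))) (E (k + 1)) := disjoint_sdiff_right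
      rw [hun, Measure.restrict_union hdisj (hEmeas (k + 1)), ih]
      -- μ.restrict (E (k+1)) = (m (k+1)).restrict (E (k+1))
      have hslice : μ.restrict (E (k + 1)) = (m (k + 1)).restrict (E (k + 1)) := by
        ext s hs
        rw [Measure.restrict_apply hs, hμ, Measure.sum_apply _ (hs.inter (hEmeas (k + 1)))]
        rw [tsum_eq_single (k + 1) ?_]
        · rw [Measure.restrict_apply (hs.inter (hEmeas (k + 1))), Measure.restrict_apply hs,
            inter_assoc, inter_self]
        · intro j hj
          rw [Measure.restrict_apply (hs.inter (hEmeas (k + 1)))]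
          rcases Nat.lt_or_ge j (k + 1) with hlt | hge
          · have : s ∩ E (k + 1) ∩ E j = ∅ := by
              rw [inter_assoc]
              have := hEdisj j (k + 1) hlt
              -- E (k+1) ∩ E j = ∅
              rw [this]
              simp
            rw [this]; simp
          · have hlt2 : k + 1 < j := lt_of_le_of_ne hge (Ne.symm hj)
            have : E (k + 1) ∩ E j = ∅ := by
              rw [inter_comm]; exact hEdisj (k + 1) j hlt2
            rw [inter_assoc, this]; simp
      rw [hslice]
      -- m k + (m (k+1)).restrict (E (k+1)) = m (k+1)
      have : m (k + 1) = m k + (m (k + 1)).restrict (E (k + 1)) := by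
        conv_lhs => rw [← hmres (k + 1), hun,
          Measure.restrict_union hdisj (hEmeas (k + 1)), hconsist k]
      rw [← this]
  -- mass of Fi (-k)
  have hμFk : ∀ k : ℕ, μ (Fi (-(k : ℤ))) = (b k)⁻¹ := by
    intro k
    have := congrArg (fun m : Measure F => m (Fi (-(k : ℤ)))) (hres k)
    simp only [Measure.restrict_apply_self] at this
    rw [this, hm]
    simp only [Measure.smul_apply, smul_eq_mul]
    rw [(hν (-(k : ℤ))).2.1, mul_one]
  have hbnet : ∀ k, b k ≠ ⊤ := fun k => (lt_of_le_of_lt (hble k) ENNReal.one_lt_top).ne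
  -- σ-finiteness
  have hsf : SigmaFinite μ := by
    apply Measure.FiniteSpanningSetsIn.sigmaFinite
      (C := univ)
    exact
      { set := fun k => Fi (-(k : ℤ))
        set_mem := fun _ => trivial
        finite := fun k => by rw [hμFk k]; exact ENNReal.inv_lt_top.2 (hbpos k)
        spanning := hcover }
  -- HClass membership
  have hμH : μ ∈ HClass Fi := by
    refine ⟨hsf, fun i => ?_⟩
    rcases le_or_gt i 0 with hi | hi
    · have hk : i = -(((-i).toNat : ℕ) : ℤ) := by omega
      rw [hk, hμFk]
      exact ⟨ENNReal.inv_pos.2 (hbnet _), ENNReal.inv_lt_top.2 (hbpos _)⟩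
    · have hsub : Fi i ⊆ Fi 0 := hanti hi.le
      have : μ (Fi i) = ν 0 (Fi i) := by
        rw [← Measure.restrict_eq_self μ hsub]
        have h0 : μ.restrict (Fi (0 : ℤ)) = m 0 := by simpa using hres 0
        rw [h0, hm]
        simp only [Measure.smul_apply, smul_eq_mul, Nat.cast_zero, neg_zero]
        have hb0 : b 0 = 1 := by
          rw [hb]; simpa using (hν 0).2.1
        rw [hb0]
        simp
      rw [this]
      constructor
      · have := hseq_pos Fi hmeas hanti hν i.toNat 0
        rwa [zero_add, Int.toNat_of_nonneg hi.le] at this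
      · exact lt_of_le_of_lt ((measure_mono (subset_univ _)).trans (hν 0).1.le)
          ENNReal.one_lt_top
  refine ⟨μ, hμH, ?_⟩
  -- etaMap μ = ν
  have hneg : ∀ k : ℕ, etaMap Fi μ (-(k : ℤ)) = ν (-(k : ℤ)) := by
    intro k
    show (μ (Fi (-(k : ℤ))))⁻¹ • μ.restrict (Fi (-(k : ℤ))) = ν (-(k : ℤ))
    rw [hμFk k, hres k, inv_inv, hm, smul_smul,
      ENNReal.mul_inv_cancel (hbpos k).ne' (hbnet k), one_smul]
  have hH := part1 Fi hmeas hdec μ hμH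
  funext i
  induction i using Int.induction_on with
  | zero =>
    have h := hneg 0
    norm_num at h
    exact h
  | succ n ih =>
    rw [(hH (n : ℤ)).2.2.2, ih, ← (hν (n : ℤ)).2.2.2]
  | pred n _ =>
    have := hneg (n + 1)
    have he : (-((n + 1 : ℕ) : ℤ)) = -(n : ℤ) - 1 := by push_cast; ring
    rwa [he] at this

/-- `η` is a well-defined bijection from `𝓗((F_i))` modulo scale equivalence onto
`H((F_i))`: it maps `𝓗` into `H`, two measures have the same image iff they are
positive scalar multiples of each other, and every element of `H` is an image. -/
theorem etaMap_bijective (Fi : ℤ → Set F) (hmeas : ∀ i, MeasurableSet (Fi i))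
    (hdec : ∀ i : ℤ, Fi (i + 1) ⊆ Fi i) (hcover : ⋃ k : ℕ, Fi (-(k : ℤ)) = Set.univ) :
    (∀ μ ∈ HClass Fi, etaMap Fi μ ∈ HSeq Fi) ∧
    (∀ μ ∈ HClass Fi, ∀ μ' ∈ HClass Fi,
      (etaMap Fi μ = etaMap Fi μ' ↔ ∃ c : NNReal, 0 < c ∧ μ' = (c : ENNReal) • μ)) ∧
    (∀ ν ∈ HSeq Fi, ∃ μ ∈ HClass Fi, etaMap Fi μ = ν) := by
  exact ⟨part1 Fi hmeas hdec, part2 Fi hmeas hdec hcover, part3 Fi hmeas hdec hcover⟩
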